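/- Let X be a compact metric space, f : X → X continuous with the s-limit shadowing property, C a chain component, and D ∈ D(C). Then for each n ≥ 2 the set A_n = ∩_{ε>0} { (x_1,…,x_n) ∈ [V^s(D)]^n : T_f(x_1,…,x_n; ε) has upper density 1 } is a dense G_δ subset of [V^s(D)]^n. In fact, the set of n-tuples (x_1,…,x_n) ∈ [V^s(D)]^n all of whose coordinates are forward-asymptotic to a fixed point p ∈ V^s(D) (i.e., d(f^i(p), f^i(x_j)) → 0 for all j) is dense in [V^s(D)]^n and is contained in A_n. -/

import Mathlib

open Filter Topology Metric Set

variable {X : Type*} [MetricSpace X]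

/-- There is a `δ`-chain of `f` from `x` to `y`. -/
def ChainReach (f : X → X) (δ : ℝ) (x y : X) : Prop :=
  ∃ k : ℕ, 0 < k ∧ ∃ c : ℕ → X, c 0 = x ∧ c k = y ∧
    ∀ i < k, dist (f (c i)) (c (i + 1)) ≤ δ

/-- `x → y` : for every `δ > 0` there is a `δ`-chain from `x` to `y`. -/
def ChainTo (f : X → X) (x y : X) : Prop := ∀ δ > 0, ChainReach f δ x y

/-- The chain recurrent set. -/
def CR (f : X → X) : Set X := {x | ChainTo f x x}

/-- The relation `x ↔ y`. -/
def ChainRel (f : X → X) (x y : X) : Prop := ChainTo f x y ∧ ChainTo f y x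

/-- A chain component: an equivalence class of `↔` on `CR f`. -/
def IsChainComponent (f : X → X) (C : Set X) : Prop :=
  ∃ x ∈ CR f, C = {y | y ∈ CR f ∧ ChainRel f x y}

/-- A `δ`-chain of `f` from `x` to `y` of length `k`, all of whose points lie in `S`. -/
def ChainInLen (f : X → X) (S : Set X) (δ : ℝ) (x y : X) (k : ℕ) : Prop :=
  0 < k ∧ ∃ c : ℕ → X, (∀ i ≤ k, c i ∈ S) ∧ c 0 = x ∧ c k = y ∧
    ∀ i < k, dist (f (c i)) (c (i + 1)) ≤ δ

/-- There is a `δ`-chain from `x` to `y` inside `S`. -/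
def ChainInReach (f : X → X) (S : Set X) (δ : ℝ) (x y : X) : Prop :=
  ∃ k, ChainInLen f S δ x y k

/-- `f` restricted to `S` is chain transitive. -/
def ChainTransitiveOn (f : X → X) (S : Set X) : Prop :=
  ∀ x ∈ S, ∀ y ∈ S, ∀ δ > 0, ChainInReach f S δ x y

/-- The set of lengths of `δ`-cycles of `f` restricted to `C`. -/
def cycLengths (f : X → X) (C : Set X) (δ : ℝ) : Set ℕ :=
  {k | ∃ x ∈ C, ChainInLen f C δ x x k}

/-- The relation `∼_{C,δ}` : there is a `δ`-chain in `C` from `x` to `y` whose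
length is divisible by the gcd `m(C,δ)` of all `δ`-cycle lengths (divisibility by
the gcd is expressed via common divisors). -/
def relCdelta (f : X → X) (C : Set X) (δ : ℝ) (x y : X) : Prop :=
  ∃ k : ℕ, (∀ d : ℕ, (∀ l ∈ cycLengths f C δ, d ∣ l) → d ∣ k) ∧
    ChainInLen f C δ x y k

/-- The chain proximal relation `∼_C`. -/
def relC (f : X → X) (C : Set X) (x y : X) : Prop := ∀ δ > 0, relCdelta f C δ x y

/-- The class of `∼_{C,δ}` containing `x`. -/
def classCdelta (f : X → X) (C : Set X) (δ : ℝ) (x : X) : Set X :=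
  {y | y ∈ C ∧ relCdelta f C δ x y}

/-- The class of `∼_C` containing `x`. -/
def classC (f : X → X) (C : Set X) (x : X) : Set X :=
  {y | y ∈ C ∧ relC f C x y}

/-- The basin of attraction of a set. -/
def basin (f : X → X) (C : Set X) : Set X :=
  {x | Tendsto (fun i => infDist (f^[i] x) C) atTop (𝓝 0)}

/-- `V^s(D)` for the class `D` of `∼_C` containing the point `x ∈ C`. -/
def Vs (f : X → X) (C : Set X) (x : X) : Set X :=
  {z | z ∈ basin f C ∧ ∀ δ > 0,
    Tendsto (fun i => infDist (f^[i] z) (f^[i] '' classCdelta f C δ x)) atTop (𝓝 0)}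

/-- `(x i)` is a `δ`-limit-pseudo orbit of `f`. -/
def LimitPseudoOrbit (f : X → X) (δ : ℝ) (x : ℕ → X) : Prop :=
  (∀ i, dist (f (x i)) (x (i + 1)) ≤ δ) ∧
  Tendsto (fun i => dist (f (x i)) (x (i + 1))) atTop (𝓝 0)

/-- `f` has the s-limit shadowing property. -/
def SLimitShadowing (f : X → X) : Prop :=
  ∀ ε > 0, ∃ δ > 0, ∀ x : ℕ → X, LimitPseudoOrbit f δ x →
    ∃ z : X, (∀ i, dist (f^[i] z) (x i) ≤ ε) ∧
      Tendsto (fun i => dist (f^[i] z) (x i)) atTop (𝓝 0)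

/-- `f` has the shadowing property. -/
def Shadowing (f : X → X) : Prop :=
  ∀ ε > 0, ∃ δ > 0, ∀ x : ℕ → X, (∀ i, dist (f (x i)) (x (i + 1)) ≤ δ) →
    ∃ z : X, ∀ i, dist (f^[i] z) (x i) ≤ ε

/-- The upper density of a set of natural numbers. -/
noncomputable def upperDensity (A : Set ℕ) : ℝ :=
  Filter.limsup (fun n => ((A ∩ Set.Iio n).ncard : ℝ) / n) Filter.atTop

/-- The family of sets of upper density one. -/
def Fud1 : Set (Set ℕ) := {A | upperDensity A = 1}

/-- The family of thick sets. -/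
def Fthick : Set (Set ℕ) :=
  {A | ∀ j : ℕ, 1 ≤ j → ∃ i : ℕ, ∀ l < j, i + l ∈ A}

/-- The dual of the family of sets containing an arithmetic progression:
sets meeting every progression `{p, p+m, p+2m, …}` with `m ≥ 1`. -/
def FiapStar : Set (Set ℕ) :=
  {A | ∀ p : ℕ, ∀ m : ℕ, 1 ≤ m → ∃ q : ℕ, p + q * m ∈ A}

/-- The family of infinite sets. -/
def Finfinite : Set (Set ℕ) := {A | A.Infinite}

set_option linter.unusedSectionVars false

section Stmt18Aux

theorem chainInLen_trans {f : X → X} {S : Set X} {δ : ℝ} {x y z : X} {k l : ℕ}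
    (h1 : ChainInLen f S δ x y k) (h2 : ChainInLen f S δ y z l) :
    ChainInLen f S δ x z (k + l) := by
  obtain ⟨hk, c1, hS1, h10, h1k, hd1⟩ := h1
  obtain ⟨hl, c2, hS2, h20, h2l, hd2⟩ := h2
  refine ⟨by omega, fun i => if i ≤ k then c1 i else c2 (i - k), ?_, by simp [h10], ?_, ?_⟩
  · intro i hi
    by_cases h : i ≤ k
    · simpa [h] using hS1 i h
    · simp only [h, if_false]
      exact hS2 (i - k) (by omega)
  · have h : ¬ (k + l ≤ k) := by omega
    simpa [h, Nat.add_sub_cancel_left] using h2l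
  · intro i hi
    by_cases h1' : i + 1 ≤ k
    · have h' : i ≤ k := by omega
      simpa [h', h1'] using hd1 i (by omega)
    · by_cases h2' : i ≤ k
      · have hik : i = k := by omega
        have hfst : (if i ≤ k then c1 i else c2 (i - k)) = c2 0 := by
          simp [h2', hik, h1k, h20]
        have hsnd : (if i + 1 ≤ k then c1 (i+1) else c2 (i + 1 - k)) = c2 1 := by
          have : i + 1 - k = 1 := by omega
          simp [h1', this]
        simp only [hfst, hsnd]
        exact hd2 0 (by omega)
      · have h3 : ¬ (i + 1 ≤ k) := by omega
        have e1 : i + 1 - k = (i - k) + 1 := by omega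
        simp only [h2', h3, if_false, e1]
        exact hd2 (i - k) (by omega)

theorem chainInLen_single {f : X → X} {S : Set X} {δ : ℝ} (hδ : 0 ≤ δ) {x : X}
    (hx : x ∈ S) (hfx : f x ∈ S) : ChainInLen f S δ x (f x) 1 := by
  refine ⟨one_pos, fun i => if i = 0 then x else f x, ?_, by simp, by simp, ?_⟩
  · intro i _
    by_cases h : i = 0 <;> simp [h, hx, hfx]
  · intro i hi
    have : i = 0 := by omega
    simpa [this] using hδ

theorem chainInLen_extend_orbit {f : X → X} {S : Set X} {δ : ℝ} (hδ : 0 ≤ δ)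
    (hinv : ∀ u ∈ S, f u ∈ S) {x y : X} {k : ℕ}
    (h : ChainInLen f S δ x y k) : ∀ t, ChainInLen f S δ x (f^[t] y) (k + t) := by
  intro t
  induction t with
  | zero => simpa using h
  | succ t ih =>
    have hyS : f^[t] y ∈ S := by
      obtain ⟨_, c, hS, _, hk, _⟩ := ih
      have := hS (k + t) le_rfl
      rwa [hk] at this
    have hstep : ChainInLen f S δ (f^[t] y) (f^[t+1] y) 1 := by
      rw [Function.iterate_succ_apply']
      exact chainInLen_single hδ hyS (hinv _ hyS)
    simpa [Nat.add_assoc] using chainInLen_trans ih hstep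

theorem chainReach_trans {f : X → X} {δ : ℝ} {x y z : X}
    (h1 : ChainReach f δ x y) (h2 : ChainReach f δ y z) : ChainReach f δ x z := by
  obtain ⟨k, hk, c1, h10, h1k, hd1⟩ := h1
  obtain ⟨l, hl, c2, h20, h2l, hd2⟩ := h2
  refine ⟨k + l, by omega, fun i => if i ≤ k then c1 i else c2 (i - k), by simp [h10], ?_, ?_⟩
  · have h : ¬ (k + l ≤ k) := by omega
    simpa [h, Nat.add_sub_cancel_left] using h2l
  · intro i hi
    by_cases h1' : i + 1 ≤ k
    · have h' : i ≤ k := by omega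
      simpa [h', h1'] using hd1 i (by omega)
    · by_cases h2' : i ≤ k
      · have hik : i = k := by omega
        have hfst : (if i ≤ k then c1 i else c2 (i - k)) = c2 0 := by
          simp [h2', hik, h1k, h20]
        have hsnd : (if i + 1 ≤ k then c1 (i+1) else c2 (i + 1 - k)) = c2 1 := by
          have : i + 1 - k = 1 := by omega
          simp [h1', this]
        simp only [hfst, hsnd]
        exact hd2 0 (by omega)
      · have h3 : ¬ (i + 1 ≤ k) := by omega
        have e1 : i + 1 - k = (i - k) + 1 := by omega
        simp only [h2', h3, if_false, e1]
        exact hd2 (i - k) (by omega)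

theorem chainTo_trans {f : X → X} {x y z : X}
    (h1 : ChainTo f x y) (h2 : ChainTo f y z) : ChainTo f x z :=
  fun δ hδ => chainReach_trans (h1 δ hδ) (h2 δ hδ)

theorem chainTo_self_fx {f : X → X} (x : X) : ChainTo f x (f x) := by
  intro δ hδ
  refine ⟨1, one_pos, fun i => if i = 0 then x else f x, by simp, by simp, ?_⟩
  intro i hi
  have : i = 0 := by omega
  simp only [this, if_pos rfl, if_neg one_ne_zero, zero_add]
  simpa using hδ.le

theorem unif_mod [CompactSpace X] {f : X → X} (hf : Continuous f) {ε : ℝ} (hε : 0 < ε) :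
    ∃ κ > 0, κ ≤ ε ∧ ∀ a b : X, dist a b ≤ κ → dist (f a) (f b) ≤ ε := by
  have h := Metric.uniformContinuous_iff.1 (CompactSpace.uniformContinuous_of_continuous hf) ε hε
  obtain ⟨κ₀, hκ₀, h⟩ := h
  refine ⟨min (κ₀ / 2) ε, by positivity, min_le_right _ _, fun a b hab => ?_⟩
  have : dist a b < κ₀ := lt_of_le_of_lt (hab.trans (min_le_left _ _)) (by linarith)
  exact (h this).le

theorem chainReach_fx_x [CompactSpace X] {f : X → X} (hf : Continuous f) {x : X}
    (hx : x ∈ CR f) {δ : ℝ} (hδ : 0 < δ) : ChainReach f δ (f x) x := by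
  obtain ⟨κ, hκ, hκle, hmod⟩ := unif_mod hf (show (0:ℝ) < δ / 2 by linarith)
  obtain ⟨k, hk, c, hc0, hck, hcd⟩ := hx κ hκ
  rcases eq_or_lt_of_le (show 1 ≤ k from hk) with h1 | h2
  · -- k = 1
    have hk1 : k = 1 := h1.symm
    have hstep : dist (f x) x ≤ κ := by
      have h0 := hcd 0 (by omega)
      rw [hk1] at hck
      rw [hc0, zero_add, hck] at h0
      exact h0
    refine ⟨1, one_pos, fun i => if i = 0 then f x else x, by simp, by simp, ?_⟩
    intro i hi
    have hi0 : i = 0 := by omega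
    simp only [hi0, if_pos rfl, if_neg one_ne_zero, zero_add]
    calc dist (f (f x)) x ≤ dist (f (f x)) (f x) + dist (f x) x := dist_triangle _ _ _
      _ ≤ δ/2 + κ := add_le_add (hmod _ _ hstep) hstep
      _ ≤ δ := by linarith
  · -- k ≥ 2
    have hk2 : 2 ≤ k := h2
    refine ⟨k - 1, by omega, fun j => if j = 0 then f x else c (j + 1), by simp, ?_, ?_⟩
    · have hne : k - 1 ≠ 0 := by omega
      have : k - 1 + 1 = k := by omega
      simp [hne, this, hck]
    · intro j hj
      by_cases hj0 : j = 0
      · have h01 : dist (f x) (c 1) ≤ κ := by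
          have h0 := hcd 0 (by omega)
          rwa [hc0, zero_add] at h0
        have h12 : dist (f (c 1)) (c 2) ≤ κ := hcd 1 (by omega)
        simp only [hj0, if_pos rfl, if_neg one_ne_zero, zero_add]
        calc dist (f (f x)) (c 2)
            ≤ dist (f (f x)) (f (c 1)) + dist (f (c 1)) (c 2) := dist_triangle _ _ _
          _ ≤ δ/2 + κ := add_le_add (hmod _ _ h01) h12
          _ ≤ δ := by linarith
      · have hne : j + 1 ≠ 0 := by omega
        simp only [if_neg hj0, if_neg hne]
        have := hcd (j + 1) (by omega)
        calc dist (f (c (j+1))) (c (j+1+1)) ≤ κ := this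
          _ ≤ δ := by linarith

theorem mem_CR_image [CompactSpace X] {f : X → X} (hf : Continuous f) {x : X}
    (hx : x ∈ CR f) : f x ∈ CR f :=
  fun δ hδ => chainReach_trans (chainReach_fx_x hf hx hδ) (chainTo_self_fx x δ hδ)

theorem chainComponent_mapsTo [CompactSpace X] {f : X → X} (hf : Continuous f) {C : Set X}
    (hC : IsChainComponent f C) : ∀ u ∈ C, f u ∈ C := by
  obtain ⟨s, hs, rfl⟩ := hC
  rintro u ⟨hu1, hu2, hu3⟩
  refine ⟨mem_CR_image hf hu1, chainTo_trans hu2 (chainTo_self_fx u), ?_⟩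
  exact chainTo_trans (fun δ hδ => chainReach_fx_x hf hu1 hδ) hu3

theorem chainComponent_iterate_mem [CompactSpace X] {f : X → X} (hf : Continuous f) {C : Set X}
    (hC : IsChainComponent f C) {u : X} (hu : u ∈ C) : ∀ t, f^[t] u ∈ C := by
  intro t
  induction t with
  | zero => simpa using hu
  | succ t ih =>
    rw [Function.iterate_succ_apply']
    exact chainComponent_mapsTo hf hC _ ih

theorem chainTo_of_memC {f : X → X} {C : Set X}
    (hC : IsChainComponent f C) {u v : X} (hu : u ∈ C) (hv : v ∈ C) : ChainTo f u v := by
  obtain ⟨s, hs, rfl⟩ := hC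
  exact chainTo_trans hu.2.2 hv.2.1

/-- Every sufficiently fine chain between two points of a chain component stays near `C`. -/
theorem eta_claim [CompactSpace X] {f : X → X} (hf : Continuous f) {C : Set X}
    (hC : IsChainComponent f C) {u v : X} (hu : u ∈ C) (hv : v ∈ C) {ρ : ℝ} (hρ : 0 < ρ) :
    ∃ η > 0, ∀ (c : ℕ → X) (k : ℕ), 0 < k → c 0 = u → c k = v →
      (∀ i < k, dist (f (c i)) (c (i+1)) ≤ η) → ∀ i ≤ k, ∃ w ∈ C, dist (c i) w ≤ ρ := by
  by_contra hcon
  push_neg at hcon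
  -- for each n, a (1/(n+1))-chain with a bad point
  have hstep : ∀ n : ℕ, ∃ (c : ℕ → X) (k : ℕ), 0 < k ∧ c 0 = u ∧ c k = v ∧
      (∀ i < k, dist (f (c i)) (c (i+1)) ≤ 1 / (n+1)) ∧
      ∃ i ≤ k, ∀ w ∈ C, ρ < dist (c i) w := by
    intro n
    obtain ⟨c, k, h1, h2, h3, h4, i, hi, hbad⟩ := hcon (1 / (n+1)) (by positivity)
    exact ⟨c, k, h1, h2, h3, h4, i, hi, hbad⟩
  choose c k hk hc0 hck hcd idx hidx hbad using hstep
  -- bad indices are strictly interior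
  have hi0 : ∀ n, idx n ≠ 0 := by
    intro n h0
    have := hbad n u hu
    rw [h0, hc0 n] at this
    simp at this
    linarith
  have hik : ∀ n, idx n ≠ k n := by
    intro n h0
    have := hbad n v hv
    rw [h0, hck n] at this
    simp at this
    linarith
  -- limit point of the bad points
  obtain ⟨q, -, φ, hφ, hq⟩ := isCompact_univ.tendsto_subseq
    (x := fun n => c n (idx n)) (fun n => mem_univ _)
  obtain ⟨s, hs, hCeq⟩ := hC
  -- auxiliary: find good approximation indices
  have hsel : ∀ ρ' > 0, ∀ κ > 0, ∃ n : ℕ, dist (c (φ n) (idx (φ n))) q ≤ κ ∧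
      (1 : ℝ) / (φ n + 1) ≤ ρ' := by
    intro ρ' hρ' κ hκ
    have h1 : ∀ᶠ n in atTop, dist (c (φ n) (idx (φ n))) q ≤ κ := by
      filter_upwards [hq (Metric.closedBall_mem_nhds q hκ)] with n hn
      simpa [Metric.mem_closedBall] using hn
    have h2 : ∀ᶠ n : ℕ in atTop, (1 : ℝ) / (φ n + 1) ≤ ρ' := by
      obtain ⟨N, hN⟩ := exists_nat_gt (1 / ρ')
      filter_upwards [eventually_ge_atTop N] with n hn
      have hφn : (N : ℝ) ≤ (φ n : ℝ) := by
        exact_mod_cast hn.trans (hφ.le_apply)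
      rw [div_le_iff₀ (by positivity)]
      have h1ρ : 1 / ρ' < N := hN
      have : 1 / ρ' ≤ (φ n : ℝ) + 1 := by linarith
      calc (1:ℝ) = ρ' * (1/ρ') := by field_simp
        _ ≤ ρ' * ((φ n : ℝ) + 1) := by
            exact mul_le_mul_of_nonneg_left this hρ'.le
    exact ((h1.and h2).exists)
  -- piece 1 : q reaches v
  have piece1 : ∀ ρ' > 0, ChainReach f ρ' q v := by
    intro ρ' hρ'
    obtain ⟨κ, hκ, hκle, hmod⟩ := unif_mod hf (show (0:ℝ) < ρ'/2 by linarith)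
    obtain ⟨n, hn1, hn2⟩ := hsel (ρ'/2) (by linarith) κ hκ
    set m := φ n with hm
    have hintlt : idx m < k m := lt_of_le_of_ne (hidx m) (hik m)
    refine ⟨k m - idx m, by omega, fun j => if j = 0 then q else c m (idx m + j), by simp, ?_, ?_⟩
    · have hne : k m - idx m ≠ 0 := by omega
      have : idx m + (k m - idx m) = k m := by omega
      simp [hne, this, hck m]
    · intro j hj
      by_cases hj0 : j = 0
      · simp only [hj0, if_pos rfl, if_neg one_ne_zero, zero_add]
        have h1 : dist (f (c m (idx m))) (c m (idx m + 1)) ≤ 1 / (m + 1) :=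
          hcd m (idx m) (by omega)
        calc dist (f q) (c m (idx m + 1))
            ≤ dist (f q) (f (c m (idx m))) + dist (f (c m (idx m))) (c m (idx m + 1)) :=
              dist_triangle _ _ _
          _ ≤ ρ'/2 + 1/(m+1) := add_le_add (hmod _ _ (by rw [dist_comm]; exact hn1)) h1
          _ ≤ ρ'/2 + ρ'/2 := by gcongr
          _ = ρ' := by ring
      · have hne : j + 1 ≠ 0 := by omega
        simp only [if_neg hj0, if_neg hne]
        have : idx m + j + 1 = idx m + (j + 1) := by ring
        have h1 : dist (f (c m (idx m + j))) (c m (idx m + j + 1)) ≤ 1 / (m + 1) :=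
          hcd m (idx m + j) (by omega)
        calc dist (f (c m (idx m + j))) (c m (idx m + (j+1)))
            = dist (f (c m (idx m + j))) (c m (idx m + j + 1)) := by rw [← Nat.add_assoc]
          _ ≤ 1/(m+1) := h1
          _ ≤ ρ'/2 := hn2
          _ ≤ ρ' := by linarith
  -- piece 2 : u reaches q
  have piece2 : ∀ ρ' > 0, ChainReach f ρ' u q := by
    intro ρ' hρ'
    obtain ⟨n, hn1, hn2⟩ := hsel (ρ'/2) (by linarith) (ρ'/2) (by linarith)
    set m := φ n with hm
    have hipos : 0 < idx m := Nat.pos_of_ne_zero (hi0 m)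
    have hle : idx m ≤ k m := hidx m
    refine ⟨idx m, hipos, fun j => if j = idx m then q else c m j, ?_, by simp, ?_⟩
    · have hne : (0 : ℕ) ≠ idx m := fun h => hi0 m h.symm
      simp only [if_neg hne, hc0 m]
    · intro j hj
      have hjne : j ≠ idx m := by omega
      by_cases hj1 : j + 1 = idx m
      · simp only [if_neg hjne, if_pos hj1]
        have h1 : dist (f (c m j)) (c m (j+1)) ≤ 1/(m+1) := hcd m j (by omega)
        calc dist (f (c m j)) q ≤ dist (f (c m j)) (c m (j+1)) + dist (c m (j+1)) q :=
              dist_triangle _ _ _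
          _ ≤ 1/(m+1) + ρ'/2 := by
              refine add_le_add h1 ?_
              rw [hj1]; exact hn1
          _ ≤ ρ'/2 + ρ'/2 := by gcongr
          _ = ρ' := by ring
      · simp only [if_neg hjne, if_neg hj1]
        have h1 : dist (f (c m j)) (c m (j+1)) ≤ 1/(m+1) := hcd m j (by omega)
        calc dist (f (c m j)) (c m (j+1)) ≤ 1/(m+1) := h1
          _ ≤ ρ'/2 := hn2
          _ ≤ ρ' := by linarith
  -- q belongs to C
  have hu_q : ChainTo f u q := fun δ hδ => piece2 δ hδ
  have hq_v : ChainTo f q v := fun δ hδ => piece1 δ hδ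
  have huC := hu; have hvC := hv
  rw [hCeq] at huC hvC
  have hqC : q ∈ C := by
    rw [hCeq]
    have hvu : ChainTo f v u := chainTo_trans hvC.2.2 huC.2.1
    exact ⟨chainTo_trans hq_v (chainTo_trans hvu hu_q),
      chainTo_trans huC.2.1 hu_q, chainTo_trans hq_v hvC.2.2⟩
  -- contradiction
  have : ∀ᶠ n in atTop, dist (c (φ n) (idx (φ n))) q < ρ := by
    filter_upwards [hq (Metric.ball_mem_nhds q hρ)] with n hn
    simpa [Metric.mem_ball] using hn
  obtain ⟨n, hn⟩ := this.exists
  exact absurd hn (not_lt.2 (hbad (φ n) q hqC).le)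

/-- Internal chain transitivity of a chain component. -/
theorem ict [CompactSpace X] {f : X → X} (hf : Continuous f) {C : Set X}
    (hC : IsChainComponent f C) {u v : X} (hu : u ∈ C) (hv : v ∈ C) {δ : ℝ} (hδ : 0 < δ) :
    ∃ k, ChainInLen f C δ u v k := by
  obtain ⟨κ, hκ, hκle, hmod⟩ := unif_mod hf (show (0:ℝ) < δ/3 by linarith)
  obtain ⟨η, hη, hclaim⟩ := eta_claim hf hC hu hv hκ
  have hpos : 0 < min η κ := lt_min hη hκ
  obtain ⟨k, hk, c, hc0, hck, hcd⟩ := chainTo_of_memC hC hu hv (min η κ) hpos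
  have hnear : ∀ i ≤ k, ∃ w ∈ C, dist (c i) w ≤ κ := by
    refine hclaim c k hk hc0 hck (fun i hi => ?_)
    exact (hcd i hi).trans (min_le_left _ _)
  classical
  set W : ℕ → X := fun i =>
    if i = 0 then u else if i = k then v else
      if h : ∃ w ∈ C, dist (c i) w ≤ κ then h.choose else u with hW
  have hWC : ∀ i ≤ k, W i ∈ C := by
    intro i hi
    simp only [hW]
    by_cases h0 : i = 0
    · simpa [h0] using hu
    · by_cases hk' : i = k
      · simp [h0, hk', hk.ne', hv]
      · have h := hnear i hi
        simp only [h0, if_false, hk', dif_pos h]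
        exact h.choose_spec.1
  have hWd : ∀ i ≤ k, dist (c i) (W i) ≤ κ := by
    intro i hi
    simp only [hW]
    by_cases h0 : i = 0
    · simpa [h0, hc0] using hκ.le
    · by_cases hk' : i = k
      · simpa [h0, hk', hk.ne', hck] using hκ.le
      · have h := hnear i hi
        simp only [h0, if_false, hk', dif_pos h]
        exact h.choose_spec.2
  refine ⟨k, hk, W, hWC, by simp [hW], by simp [hW, hk.ne'], ?_⟩
  · intro i hi
    calc dist (f (W i)) (W (i+1))
        ≤ dist (f (W i)) (f (c i)) + dist (f (c i)) (c (i+1)) + dist (c (i+1)) (W (i+1)) :=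
          dist_triangle4 _ _ _ _
      _ ≤ δ/3 + min η κ + κ := by
          refine add_le_add (add_le_add ?_ (hcd i hi)) (hWd (i+1) (by omega))
          exact hmod _ _ (by rw [dist_comm]; exact hWd i (by omega))
      _ ≤ δ/3 + κ + κ := by
          have := min_le_right η κ; linarith
      _ ≤ δ := by linarith

/-- Uniformly bounded-length chains inside a chain component. -/
theorem uniform_bound [CompactSpace X] {f : X → X} (hf : Continuous f) {C : Set X}
    (hC : IsChainComponent f C) {δ : ℝ} (hδ : 0 < δ) :
    ∃ R : ℕ, ∀ u ∈ C, ∀ v ∈ C, ∃ k ≤ R, ChainInLen f C δ u v k := by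
  classical
  obtain ⟨κ, hκ, hκle, hmod⟩ := unif_mod hf (show (0:ℝ) < δ/3 by linarith)
  have htb : TotallyBounded C := (isCompact_univ.totallyBounded).subset (subset_univ C)
  obtain ⟨t, htC, htfin, hcover⟩ := totallyBounded_iff_subset.1 htb
    {p : X × X | dist p.1 p.2 < κ} (Metric.dist_mem_uniformity hκ)
  set K : X → X → ℕ := fun a b => if h : ∃ k, ChainInLen f C κ a b k then h.choose else 0 with hK
  set R : ℕ := (htfin.toFinset ×ˢ htfin.toFinset).sup (fun ab => K ab.1 ab.2) with hR
  refine ⟨R, fun u huC v hvC => ?_⟩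
  obtain ⟨a, ha, hua⟩ := mem_iUnion₂.1 (hcover huC)
  obtain ⟨b, hb, hvb⟩ := mem_iUnion₂.1 (hcover hvC)
  have hex : ∃ k, ChainInLen f C κ a b k := ict hf hC (htC ha) (htC hb) hκ
  have hKab : ChainInLen f C κ a b (K a b) := by
    simp only [hK, dif_pos hex]
    exact hex.choose_spec
  have hKR : K a b ≤ R := by
    rw [hR]
    have hmem : (a, b) ∈ htfin.toFinset ×ˢ htfin.toFinset := by
      rw [Finset.mem_product]
      exact ⟨htfin.mem_toFinset.2 ha, htfin.mem_toFinset.2 hb⟩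
    exact Finset.le_sup (f := fun ab => K ab.1 ab.2) hmem
  obtain ⟨hk, c, hcC, hc0, hck, hcd⟩ := hKab
  set k := K a b
  -- replace endpoints
  set W : ℕ → X := fun i => if i = 0 then u else if i = k then v else c i with hW
  have hWC : ∀ i ≤ k, W i ∈ C := by
    intro i hi
    simp only [hW]
    by_cases h0 : i = 0
    · simpa [h0] using huC
    · by_cases hk' : i = k
      · simp [h0, hk', hk.ne', hvC]
      · rw [if_neg h0, if_neg hk']
        exact hcC i hi
  have hWd : ∀ i ≤ k, dist (W i) (c i) ≤ κ := by
    intro i hi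
    simp only [hW]
    by_cases h0 : i = 0
    · rw [if_pos h0, h0, hc0]
      exact le_of_lt hua
    · by_cases hk' : i = k
      · rw [if_neg h0, if_pos hk', hk', hck]
        exact le_of_lt hvb
      · rw [if_neg h0, if_neg hk']
        simpa using hκ.le
  refine ⟨k, hKR, hk, W, hWC, by simp [hW], by simp [hW, hk.ne'], ?_⟩
  intro i hi
  calc dist (f (W i)) (W (i+1))
      ≤ dist (f (W i)) (f (c i)) + dist (f (c i)) (c (i+1)) + dist (c (i+1)) (W (i+1)) :=
        dist_triangle4 _ _ _ _
    _ ≤ δ/3 + κ + κ := by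
        refine add_le_add (add_le_add (hmod _ _ (hWd i (by omega))) (hcd i hi)) ?_
        rw [dist_comm]
        exact hWd (i+1) (by omega)
    _ ≤ δ := by linarith

theorem add_mul_mem_of_addclosed {S : Set ℕ} (hadd : ∀ a ∈ S, ∀ b ∈ S, a + b ∈ S)
    {a t : ℕ} (ha : a ∈ S) (ht : t ∈ S) : ∀ j : ℕ, t + a * j ∈ S := by
  intro j
  induction j with
  | zero => simpa using ht
  | succ j ih =>
    have : t + a * (j + 1) = (t + a * j) + a := by ring
    rw [this]
    exact hadd _ ih _ ha

theorem semigroup_lemma {S : Set ℕ} (hne : S.Nonempty) (h0 : ∀ s ∈ S, 0 < s)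
    (hadd : ∀ a ∈ S, ∀ b ∈ S, a + b ∈ S) :
    ∃ g, 0 < g ∧ (∀ z ∈ S, g ∣ z) ∧ ∃ θ : ℕ, ∀ s, θ ≤ s → g ∣ s → s ∈ S := by
  classical
  obtain ⟨a, ha⟩ := hne
  have hapos : 0 < a := h0 a ha
  set H : AddSubgroup ℤ := AddSubgroup.closure ((fun n : ℕ => (n : ℤ)) '' S) with hH
  obtain ⟨g₀, hg₀⟩ := Int.subgroup_cyclic H
  set g : ℕ := g₀.natAbs with hg
  have hSH : ∀ z ∈ S, (z : ℤ) ∈ H := fun z hz =>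
    AddSubgroup.subset_closure (Set.mem_image_of_mem _ hz)
  have hdvd : ∀ z ∈ S, g ∣ z := by
    intro z hz
    have hzH : (z : ℤ) ∈ H := hSH z hz
    rw [hg₀, AddSubgroup.mem_closure_singleton] at hzH
    obtain ⟨n, hn⟩ := hzH
    have : g₀ ∣ (z : ℤ) := ⟨n, by rw [← hn, zsmul_eq_mul, Int.cast_id, mul_comm]⟩
    rw [← Int.natAbs_dvd] at this
    exact_mod_cast Int.ofNat_dvd.1 (by exact_mod_cast this)
  have hgpos : 0 < g := by
    rcases Nat.eq_zero_or_pos g with h | h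
    · exfalso
      have : g₀ = 0 := Int.natAbs_eq_zero.1 h
      have haH := hSH a ha
      rw [hg₀, this, AddSubgroup.mem_closure_singleton] at haH
      obtain ⟨n, hn⟩ := haH
      simp at hn
      omega
    · exact h
  -- decomposition of elements of H
  set M := AddSubmonoid.closure S with hM
  have hMS : ∀ x ∈ M, x = 0 ∨ x ∈ S := by
    intro x hx
    refine AddSubmonoid.closure_induction (fun y hy => Or.inr hy) (Or.inl rfl) ?_ hx
    rintro y z _ _ (rfl | hy) (rfl | hz)
    · simp
    · simpa using Or.inr hz
    · simpa using Or.inr hy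
    · exact Or.inr (hadd y hy z hz)
  have hdecomp : ∀ z ∈ H, ∃ x ∈ M, ∃ y ∈ M, z = (x : ℤ) - (y : ℤ) := by
    intro z hz
    rw [hH] at hz
    refine AddSubgroup.closure_induction ?_ ?_ ?_ ?_ hz
    · rintro _ ⟨w, hw, rfl⟩
      exact ⟨w, AddSubmonoid.subset_closure hw, 0, zero_mem _, by simp⟩
    · exact ⟨0, zero_mem _, 0, zero_mem _, by simp⟩
    · rintro z₁ z₂ _ _ ⟨x₁, hx₁, y₁, hy₁, rfl⟩ ⟨x₂, hx₂, y₂, hy₂, rfl⟩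
      exact ⟨x₁ + x₂, add_mem hx₁ hx₂, y₁ + y₂, add_mem hy₁ hy₂, by push_cast; ring⟩
    · rintro z₁ _ ⟨x₁, hx₁, y₁, hy₁, rfl⟩
      exact ⟨y₁, hy₁, x₁, hx₁, by ring⟩
  -- representatives per residue class
  set rep : ℕ → ℕ := fun r => if h : ∃ t, t ∈ S ∧ t % a = r then h.choose else 0 with hrep
  set θ : ℕ := (Finset.range a).sup rep + 1 with hθ
  refine ⟨g, hgpos, hdvd, θ, fun s hθs hgs => ?_⟩
  -- s is in H
  have hsH : (s : ℤ) ∈ H := by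
    rw [hg₀, AddSubgroup.mem_closure_singleton]
    have h1 : g₀ ∣ ((g : ℕ) : ℤ) := Int.dvd_natAbs.2 dvd_rfl
    have h2 : ((g : ℕ) : ℤ) ∣ (s : ℤ) := Int.natCast_dvd_natCast.2 hgs
    obtain ⟨n, hn⟩ := h1.trans h2
    exact ⟨n, by rw [zsmul_eq_mul, Int.cast_id, mul_comm]; exact hn.symm⟩
  obtain ⟨x, hxM, y, hyM, hxy⟩ := hdecomp _ hsH
  -- s' ∈ M with s' ≡ s [MOD a]
  have hyM' : a * y ∈ M := by
    have : a ∈ M := AddSubmonoid.subset_closure ha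
    have := nsmul_mem hyM a
    simpa [nsmul_eq_mul] using this
  have hs' : x + (a - 1) * y ∈ M := by
    have h1 : (a - 1) * y ∈ M := by
      have := nsmul_mem hyM (a - 1)
      simpa [nsmul_eq_mul] using this
    exact add_mem hxM h1
  have hmod : (x + (a - 1) * y) % a = s % a := by
    have h1 : ((x + (a-1)*y : ℕ) : ℤ) - (s : ℤ) = (a : ℤ) * y := by
      rw [hxy]
      push_cast [Nat.cast_sub (by omega : 1 ≤ a)]
      ring
    have h2 : ((a:ℕ) : ℤ) ∣ ((x + (a-1)*y : ℕ) : ℤ) - (s : ℤ) := ⟨y, h1⟩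
    have h3 : s ≡ (x + (a-1)*y) [MOD a] := Nat.modEq_iff_dvd.2 (by exact_mod_cast h2)
    exact h3.symm
  have hex : ∃ t, t ∈ S ∧ t % a = s % a := by
    rcases hMS _ hs' with h | h
    · refine ⟨a, ha, ?_⟩
      rw [h] at hmod
      simp only [Nat.zero_mod] at hmod
      rw [Nat.mod_self]
      exact hmod
    · exact ⟨_, h, hmod⟩
  have hrlt : s % a < a := Nat.mod_lt _ hapos
  have hrep_spec : rep (s % a) ∈ S ∧ rep (s % a) % a = s % a := by
    simp only [hrep]
    rw [dif_pos hex]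
    exact hex.choose_spec
  have hrepθ : rep (s % a) ≤ (Finset.range a).sup rep :=
    Finset.le_sup (Finset.mem_range.2 hrlt)
  have hles : rep (s % a) ≤ s := by omega
  have hdvd2 : a ∣ s - rep (s % a) := by
    have hmq : rep (s % a) ≡ s [MOD a] := by
      show rep (s % a) % a = s % a
      exact hrep_spec.2
    exact (Nat.modEq_iff_dvd' hles).1 hmq
  obtain ⟨j, hj⟩ := hdvd2
  have hs_eq : s = rep (s % a) + a * j := by omega
  rw [hs_eq]
  exact add_mul_mem_of_addclosed hadd ha hrep_spec.1 j
theorem classCdelta_self [CompactSpace X] {f : X → X} (hf : Continuous f) {C : Set X}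
    (hC : IsChainComponent f C) {x₀ : X} (hx₀ : x₀ ∈ C) {δ : ℝ} (hδ : 0 < δ) :
    x₀ ∈ classCdelta f C δ x₀ := by
  obtain ⟨k, hk⟩ := ict hf hC hx₀ hx₀ hδ
  exact ⟨hx₀, k, fun d hd => hd k ⟨x₀, hx₀, hk⟩, hk⟩

theorem key_chain [CompactSpace X] {f : X → X} (hf : Continuous f) {C : Set X}
    (hC : IsChainComponent f C) {x₀ : X} (hx₀ : x₀ ∈ C) {δ : ℝ} (hδ : 0 < δ)
    {a : X} (ha : a ∈ classCdelta f C δ x₀) (N : ℕ) :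
    ∃ Θ : ℕ, N + 2 ≤ Θ ∧ ∀ M, Θ ≤ M → ∀ b ∈ classCdelta f C δ x₀,
      ChainInLen f C δ (f^[N] a) (f^[M-1] b) (M - 1 - N) := by
  obtain ⟨haC, ℓa, hℓad, hℓac⟩ := ha
  have hinv : ∀ u ∈ C, f u ∈ C := chainComponent_mapsTo hf hC
  set u := f^[N] a with hu
  have huC : u ∈ C := chainComponent_iterate_mem hf hC haC N
  obtain ⟨R, hR⟩ := uniform_bound hf hC hδ
  set Z : Set ℕ := {k | ChainInLen f C δ u u k} with hZ
  have hZne : Z.Nonempty := ict hf hC huC huC hδ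
  have hZ0 : ∀ s ∈ Z, 0 < s := fun s hs => hs.1
  have hZadd : ∀ s ∈ Z, ∀ t ∈ Z, s + t ∈ Z := fun s hs t ht => chainInLen_trans hs ht
  obtain ⟨g, hgpos, hgdvd, θ, hθ⟩ := semigroup_lemma hZne hZ0 hZadd
  have hgcyc : ∀ l ∈ cycLengths f C δ, g ∣ l := by
    rintro l ⟨w, hwC, hw⟩
    obtain ⟨l1, hl1⟩ := ict hf hC huC hwC hδ
    obtain ⟨l2, hl2⟩ := ict hf hC hwC huC hδ
    have hA : (l1 + l2) ∈ Z := chainInLen_trans hl1 hl2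
    have hB : (l1 + l + l2) ∈ Z := chainInLen_trans (chainInLen_trans hl1 hw) hl2
    have hsub := Nat.dvd_sub (hgdvd _ hB) (hgdvd _ hA)
    have he : (l1 + l + l2) - (l1 + l2) = l := by omega
    rwa [he] at hsub
  have hga : g ∣ ℓa := hℓad g hgcyc
  refine ⟨N + R + θ + 2, by omega, fun M hM b hb => ?_⟩
  obtain ⟨hbC, ℓb, hℓbd, hℓbc⟩ := hb
  have hgb : g ∣ ℓb := hℓbd g hgcyc
  set v := f^[M-1] b with hv
  have hvC : v ∈ C := chainComponent_iterate_mem hf hC hbC (M-1)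
  obtain ⟨l₁, hl₁R, hchain₁⟩ := hR u huC v hvC
  obtain ⟨q, hq⟩ := ict hf hC hvC hx₀ hδ
  -- cycle at u through x₀ and a
  have hxu : ChainInLen f C δ x₀ u (ℓa + N) := chainInLen_extend_orbit hδ.le hinv hℓac N
  have hcycu : ((l₁ + q) + (ℓa + N)) ∈ Z :=
    chainInLen_trans (chainInLen_trans hchain₁ hq) hxu
  -- cycle at x₀ through b
  have hxv : ChainInLen f C δ x₀ v (ℓb + (M-1)) := chainInLen_extend_orbit hδ.le hinv hℓbc (M-1)
  have hcycx : ((ℓb + (M-1)) + q) ∈ cycLengths f C δ :=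
    ⟨x₀, hx₀, chainInLen_trans hxv hq⟩
  -- divisibility bookkeeping
  have h1 : g ∣ l₁ + q + N := by
    have := Nat.dvd_sub (hgdvd _ hcycu) hga
    have he : ((l₁ + q) + (ℓa + N)) - ℓa = l₁ + q + N := by omega
    rwa [he] at this
  have h2 : g ∣ (M - 1) + q := by
    have := Nat.dvd_sub (hgcyc _ hcycx) hgb
    have he : ((ℓb + (M-1)) + q) - ℓb = (M - 1) + q := by omega
    rwa [he] at this
  set s := (M - 1 - N) - l₁ with hs
  have hsθ : θ ≤ s := by omega
  have hgs : g ∣ s := by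
    have := Nat.dvd_sub h2 h1
    have he : ((M - 1) + q) - (l₁ + q + N) = s := by omega
    rwa [he] at this
  have hsZ : s ∈ Z := hθ s hsθ hgs
  have := chainInLen_trans hsZ hchain₁
  have he : s + l₁ = M - 1 - N := by omega
  rwa [he] at this
theorem main_lemma [CompactSpace X] {f : X → X} (hf : Continuous f) (hs : SLimitShadowing f)
    {C : Set X} (hC : IsChainComponent f C) {x₀ : X} (hx₀ : x₀ ∈ C)
    {p : X} (hp : p ∈ Vs f C x₀) {y : X} (hy : y ∈ Vs f C x₀) {ε : ℝ} (hε : 0 < ε) :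
    ∃ z ∈ Vs f C x₀, dist z y ≤ ε ∧
      Tendsto (fun i => dist (f^[i] z) (f^[i] p)) atTop (𝓝 0) := by
  obtain ⟨δ₀, hδ₀, hshad⟩ := hs ε hε
  set D := classCdelta f C δ₀ x₀ with hD
  have hx₀D : x₀ ∈ D := classCdelta_self hf hC hx₀ hδ₀
  -- choose N and a
  have hyev : ∀ᶠ i in atTop, infDist (f^[i] y) (f^[i] '' D) < δ₀ :=
    (hy.2 δ₀ hδ₀).eventually_lt_const hδ₀
  obtain ⟨N, hN1, hNd⟩ := ((eventually_ge_atTop 1).and hyev).exists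
  obtain ⟨w', hw'mem, hw'd⟩ := (infDist_lt_iff ⟨f^[N] x₀, mem_image_of_mem _ hx₀D⟩).1 hNd
  obtain ⟨a, haD, rfl⟩ := hw'mem
  -- the connecting chain threshold
  obtain ⟨Θ, hΘ2, hKL⟩ := key_chain hf hC hx₀ hδ₀ haD N
  -- choose M and b
  have hpev : ∀ᶠ i in atTop, infDist (f^[i] p) (f^[i] '' D) < δ₀ :=
    (hp.2 δ₀ hδ₀).eventually_lt_const hδ₀
  obtain ⟨M, hMΘ, hMd⟩ := ((eventually_ge_atTop Θ).and hpev).exists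
  obtain ⟨w'', hw''mem, hw''d⟩ := (infDist_lt_iff ⟨f^[M] x₀, mem_image_of_mem _ hx₀D⟩).1 hMd
  obtain ⟨b, hbD, rfl⟩ := hw''mem
  have hNM : N + 2 ≤ M := le_trans hΘ2 hMΘ
  obtain ⟨hkpos, c, hcC, hc0, hck, hcd⟩ := hKL M hMΘ b hbD
  -- the pseudo-orbit
  set w : ℕ → X := fun i => if i < N then f^[i] y else if i ≤ M - 1 then c (i - N) else f^[i] p
    with hwdef
  have hw1 : ∀ i, i < N → w i = f^[i] y := by
    intro i h; simp [hwdef, h]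
  have hw2 : ∀ i, N ≤ i → i ≤ M - 1 → w i = c (i - N) := by
    intro i h1 h2
    have : ¬ i < N := by omega
    simp [hwdef, this, h2]
  have hw3 : ∀ i, M ≤ i → w i = f^[i] p := by
    intro i h
    have h1 : ¬ i < N := by omega
    have h2 : ¬ i ≤ M - 1 := by omega
    simp [hwdef, h1, h2]
  have hjump : ∀ i, dist (f (w i)) (w (i + 1)) ≤ δ₀ := by
    intro i
    by_cases hA : i + 1 < N
    · rw [hw1 i (by omega), hw1 (i+1) hA, ← Function.iterate_succ_apply' f i y]
      simp [hδ₀.le]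
    · by_cases hB : i + 1 = N
      · have hcc : c (N - N) = f^[N] a := by
          have : N - N = 0 := by omega
          rw [this, hc0]
        rw [hw1 i (by omega), ← Function.iterate_succ_apply' f i y]
        simp only [Nat.succ_eq_add_one]
        rw [hB, hw2 N le_rfl (by omega), hcc]
        exact hw'd.le
      · by_cases hCse : i + 1 ≤ M - 1
        · have hNi : N ≤ i := by omega
          rw [hw2 i hNi (by omega), hw2 (i+1) (by omega) hCse]
          have he : i + 1 - N = (i - N) + 1 := by omega
          rw [he]
          exact hcd (i - N) (by omega)
        · by_cases hD' : i + 1 = M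
          · have hiM : i = M - 1 := by omega
            rw [hw2 i (by omega) (by omega), hw3 (i+1) (by omega), hD', hiM, hck,
              ← Function.iterate_succ_apply' f (M-1) b]
            simp only [Nat.succ_eq_add_one]
            have he : M - 1 + 1 = M := by omega
            rw [he, dist_comm]
            exact hw''d.le
          · have hiM : M ≤ i := by omega
            rw [hw3 i hiM, hw3 (i+1) (by omega), ← Function.iterate_succ_apply' f i p]
            simp [hδ₀.le]
  have hlim : Tendsto (fun i => dist (f (w i)) (w (i + 1))) atTop (𝓝 0) := by
    have hzero : ∀ᶠ i in atTop, dist (f (w i)) (w (i + 1)) = 0 := by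
      filter_upwards [eventually_ge_atTop M] with i hi
      rw [hw3 i hi, hw3 (i+1) (by omega), ← Function.iterate_succ_apply' f i p]
      simp
    exact tendsto_const_nhds.congr' (by filter_upwards [hzero] with i h; rw [h])
  obtain ⟨z, hz1, hz2⟩ := hshad w ⟨hjump, hlim⟩
  have hzy : dist z y ≤ ε := by
    have := hz1 0
    rw [hw1 0 (by omega)] at this
    simpa using this
  have hwp : ∀ᶠ i in atTop, w i = f^[i] p := by
    filter_upwards [eventually_ge_atTop M] with i hi
    exact hw3 i hi
  have hasy : Tendsto (fun i => dist (f^[i] z) (f^[i] p)) atTop (𝓝 0) := by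
    refine hz2.congr' ?_
    filter_upwards [hwp] with i hi
    rw [hi]
  refine ⟨z, ⟨?_, ?_⟩, hzy, hasy⟩
  · -- basin
    have hb : Tendsto (fun i => dist (f^[i] z) (f^[i] p) + infDist (f^[i] p) C) atTop (𝓝 0) := by
      simpa using hasy.add hp.1
    refine squeeze_zero (fun i => infDist_nonneg) (fun i => ?_) hb
    rw [add_comm]
    exact infDist_le_infDist_add_dist.trans (by rw [dist_comm])
  · intro δ' hδ'
    have hb : Tendsto (fun i => dist (f^[i] z) (f^[i] p) +
        infDist (f^[i] p) (f^[i] '' classCdelta f C δ' x₀)) atTop (𝓝 0) := by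
      simpa using hasy.add (hp.2 δ' hδ')
    refine squeeze_zero (fun i => infDist_nonneg) (fun i => ?_) hb
    rw [add_comm]
    exact infDist_le_infDist_add_dist.trans (by rw [dist_comm])
theorem ratio_nonneg (A : Set ℕ) (n : ℕ) : 0 ≤ ((A ∩ Set.Iio n).ncard : ℝ) / n := by positivity

theorem ncard_inter_Iio_le (A : Set ℕ) (n : ℕ) : (A ∩ Set.Iio n).ncard ≤ n := by
  have h1 : (A ∩ Set.Iio n).ncard ≤ (Set.Iio n).ncard :=
    Set.ncard_le_ncard inter_subset_right (by
      rw [← Finset.coe_Iio]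
      exact (Finset.Iio n).finite_toSet)
  have h2 : (Set.Iio n : Set ℕ).ncard = n := by
    rw [← Finset.coe_Iio, Set.ncard_coe_finset, Nat.card_Iio]
  omega

theorem ratio_le_one (A : Set ℕ) (n : ℕ) : ((A ∩ Set.Iio n).ncard : ℝ) / n ≤ 1 := by
  rcases Nat.eq_zero_or_pos n with h | h
  · simp [h]
  · rw [div_le_one (by exact_mod_cast h)]
    exact_mod_cast ncard_inter_Iio_le A n

theorem density_bddAbove (A : Set ℕ) :
    IsBoundedUnder (· ≤ ·) atTop (fun n => ((A ∩ Set.Iio n).ncard : ℝ) / n) :=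
  ⟨1, Filter.eventually_map.2 (Filter.Eventually.of_forall (ratio_le_one A))⟩

theorem density_cobdd (A : Set ℕ) :
    IsCoboundedUnder (· ≤ ·) atTop (fun n => ((A ∩ Set.Iio n).ncard : ℝ) / n) :=
  IsBoundedUnder.isCoboundedUnder_le
    ⟨0, Filter.eventually_map.2 (Filter.Eventually.of_forall (ratio_nonneg A))⟩

theorem upperDensity_le_one (A : Set ℕ) : upperDensity A ≤ 1 :=
  Filter.limsup_le_of_le (density_cobdd A) (Filter.Eventually.of_forall (ratio_le_one A))

theorem upperDensity_mono {A B : Set ℕ} (h : A ⊆ B) : upperDensity A ≤ upperDensity B := by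
  refine Filter.limsup_le_limsup (Filter.Eventually.of_forall fun n => ?_)
    (density_cobdd A) (density_bddAbove B)
  rcases Nat.eq_zero_or_pos n with h0 | h0
  · simp [h0]
  · rw [div_le_div_iff_of_pos_right (by exact_mod_cast h0)]
    have := Set.ncard_le_ncard (inter_subset_inter_left (Set.Iio n) h) (by
      refine Set.Finite.subset ?_ inter_subset_right
      rw [← Finset.coe_Iio]
      exact (Finset.Iio n).finite_toSet)
    exact_mod_cast this

theorem upperDensity_eq_one_of_cofinite {A : Set ℕ} {N : ℕ} (h : ∀ i, N ≤ i → i ∈ A) :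
    upperDensity A = 1 := by
  have hle : ∀ n : ℕ, ((n:ℝ) - N) / n ≤ ((A ∩ Set.Iio n).ncard : ℝ) / n := by
    intro n
    rcases Nat.eq_zero_or_pos n with h0 | h0
    · simp [h0]
    · have hnpos : (0:ℝ) < n := by exact_mod_cast h0
      rw [div_le_div_iff_of_pos_right hnpos]
      have hsub : Set.Ico N n ⊆ A ∩ Set.Iio n := by
        rintro i ⟨h1, h2⟩
        exact ⟨h i h1, h2⟩
      have hcard : (Set.Ico N n).ncard = n - N := by
        rw [← Finset.coe_Ico, Set.ncard_coe_finset, Nat.card_Ico]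
      have h1 : (Set.Ico N n).ncard ≤ (A ∩ Set.Iio n).ncard :=
        Set.ncard_le_ncard hsub (by
          refine Set.Finite.subset ?_ inter_subset_right
          rw [← Finset.coe_Iio]
          exact (Finset.Iio n).finite_toSet)
      have hfin : ((n - N : ℕ) : ℝ) ≤ ((A ∩ Set.Iio n).ncard : ℝ) := by
        exact_mod_cast hcard ▸ h1
      calc (n:ℝ) - N ≤ ((n - N : ℕ) : ℝ) := by
            rcases le_total (N:ℝ) n with hc | hc
            · rw [Nat.cast_sub (by exact_mod_cast hc)]
            · have hneg : (n:ℝ) - N ≤ 0 := by linarith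
              exact hneg.trans (by positivity)
        _ ≤ _ := hfin
  have hlow : Tendsto (fun n : ℕ => ((n:ℝ) - N) / n) atTop (𝓝 1) := by
    have h1 : Tendsto (fun n : ℕ => 1 - (N:ℝ) * (1/n)) atTop (𝓝 1) := by
      have := tendsto_one_div_atTop_nhds_zero_nat.const_mul (N:ℝ)
      have h2 := (tendsto_const_nhds : Tendsto (fun _ : ℕ => (1:ℝ)) atTop (𝓝 1)).sub this
      simpa using h2
    refine h1.congr' ?_
    filter_upwards [eventually_gt_atTop 0] with n hn
    field_simp
  have htend : Tendsto (fun n => ((A ∩ Set.Iio n).ncard : ℝ) / n) atTop (𝓝 1) :=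
    tendsto_of_tendsto_of_tendsto_of_le_of_le hlow tendsto_const_nhds hle (ratio_le_one A)
  exact htend.limsup_eq

theorem upperDensity_eq_one_iff (A : Set ℕ) :
    upperDensity A = 1 ↔ ∀ c : ℝ, c < 1 → ∀ N : ℕ, ∃ n, N ≤ n ∧
      c < ((A ∩ Set.Iio n).ncard : ℝ) / n := by
  constructor
  · intro h c hc N
    by_contra hcon
    push_neg at hcon
    have : upperDensity A ≤ c := by
      refine Filter.limsup_le_of_le (density_cobdd A) ?_
      filter_upwards [eventually_ge_atTop N] with n hn
      exact hcon n hn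
    linarith
  · intro h
    refine le_antisymm (upperDensity_le_one A) ?_
    by_contra hcon
    push_neg at hcon
    have h2 : upperDensity A < (1 + upperDensity A)/2 := by linarith
    have h3 : (1 + upperDensity A)/2 < 1 := by linarith
    have hfreq : ∃ᶠ n in atTop, (1 + upperDensity A)/2 ≤
        ((A ∩ Set.Iio n).ncard : ℝ) / n := by
      rw [Filter.frequently_atTop]
      intro N
      obtain ⟨n, hn1, hn2⟩ := h _ h3 N
      exact ⟨n, hn1, hn2.le⟩
    have := Filter.le_limsup_of_frequently_le hfreq (density_bddAbove A)
    rw [← upperDensity] at this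
    linarith

section Assembly

variable [CompactSpace X] {f : X → X} (hf : Continuous f) (hs : SLimitShadowing f)
  {C : Set X} (hC : IsChainComponent f C) {x₀ : X} (hx₀ : x₀ ∈ C)
  {p : X} (hp : p ∈ Vs f C x₀) {n : ℕ}

include hf in
/-- openness of the per-time condition -/
theorem isOpen_time_cond (i : ℕ) {ε : ℝ} :
    IsOpen {x : Fin n → Vs f C x₀ | ∀ j k : Fin n, j < k →
      dist (f^[i] (x j : X)) (f^[i] (x k : X)) < ε} := by
  have : {x : Fin n → Vs f C x₀ | ∀ j k : Fin n, j < k →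
      dist (f^[i] (x j : X)) (f^[i] (x k : X)) < ε} =
      ⋂ (j : Fin n), ⋂ (k : Fin n),
        {x : Fin n → Vs f C x₀ | j < k → dist (f^[i] (x j : X)) (f^[i] (x k : X)) < ε} := by
    ext x
    simp only [Set.mem_iInter, Set.mem_setOf_eq]
  rw [this]
  refine isOpen_iInter_of_finite fun j => isOpen_iInter_of_finite fun k => ?_
  by_cases hjk : j < k
  · have : {x : Fin n → Vs f C x₀ | j < k → dist (f^[i] (x j : X)) (f^[i] (x k : X)) < ε} =
        {x : Fin n → Vs f C x₀ | dist (f^[i] (x j : X)) (f^[i] (x k : X)) < ε} := by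
      ext x
      simp [hjk]
    rw [this]
    have hcj : Continuous fun x : Fin n → Vs f C x₀ => f^[i] (x j : X) :=
      (hf.iterate i).comp (Continuous.subtype_val (continuous_apply j))
    have hck : Continuous fun x : Fin n → Vs f C x₀ => f^[i] (x k : X) :=
      (hf.iterate i).comp (Continuous.subtype_val (continuous_apply k))
    exact isOpen_lt (hcj.dist hck) continuous_const
  · have : {x : Fin n → Vs f C x₀ | j < k → dist (f^[i] (x j : X)) (f^[i] (x k : X)) < ε} =
        univ := by
      ext x
      simp [hjk]
    rw [this]
    exact isOpen_univ

include hf in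
theorem isOpen_card_gt {ε : ℝ} (nn : ℕ) (c : ℝ) :
    IsOpen {x : Fin n → Vs f C x₀ | c < ((({i | ∀ j k : Fin n, j < k →
      dist (f^[i] (x j : X)) (f^[i] (x k : X)) < ε} ∩ Set.Iio nn).ncard : ℝ) / nn)} := by
  rw [isOpen_iff_mem_nhds]
  intro x hx
  simp only [Set.mem_setOf_eq] at hx
  have hIiofin : (Set.Iio nn).Finite := by
    rw [← Finset.coe_Iio]
    exact (Finset.Iio nn).finite_toSet
  have hSfin : ({i | ∀ j k : Fin n, j < k →
      dist (f^[i] (x j : X)) (f^[i] (x k : X)) < ε} ∩ Set.Iio nn).Finite :=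
    hIiofin.subset inter_subset_right
  have hopen : IsOpen (⋂ i ∈ ({i | ∀ j k : Fin n, j < k →
      dist (f^[i] (x j : X)) (f^[i] (x k : X)) < ε} ∩ Set.Iio nn),
      {y : Fin n → Vs f C x₀ | ∀ j k : Fin n, j < k →
        dist (f^[i] (y j : X)) (f^[i] (y k : X)) < ε}) :=
    hSfin.isOpen_biInter fun i _ => isOpen_time_cond hf i
  have hmem : x ∈ (⋂ i ∈ ({i | ∀ j k : Fin n, j < k →
      dist (f^[i] (x j : X)) (f^[i] (x k : X)) < ε} ∩ Set.Iio nn),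
      {y : Fin n → Vs f C x₀ | ∀ j k : Fin n, j < k →
        dist (f^[i] (y j : X)) (f^[i] (y k : X)) < ε}) :=
    Set.mem_iInter₂.2 fun i hi => hi.1
  refine Filter.mem_of_superset (hopen.mem_nhds hmem) ?_
  intro y hy
  simp only [Set.mem_setOf_eq]
  have hsub : ({i | ∀ j k : Fin n, j < k →
      dist (f^[i] (x j : X)) (f^[i] (x k : X)) < ε} ∩ Set.Iio nn) ⊆
      ({i | ∀ j k : Fin n, j < k →
      dist (f^[i] (y j : X)) (f^[i] (y k : X)) < ε} ∩ Set.Iio nn) :=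
    fun i hi => ⟨Set.mem_iInter₂.1 hy i hi, hi.2⟩
  have hcard := Set.ncard_le_ncard hsub (hIiofin.subset inter_subset_right)
  refine lt_of_lt_of_le hx ?_
  rcases Nat.eq_zero_or_pos nn with h0 | h0
  · simp [h0]
  · rw [div_le_div_iff_of_pos_right (by exact_mod_cast h0)]
    exact_mod_cast hcard

include hf in
theorem isGδ_A :
    IsGδ {x : Fin n → Vs f C x₀ | ∀ ε > 0,
        upperDensity {i | ∀ j k : Fin n, j < k →
          dist (f^[i] (x j : X)) (f^[i] (x k : X)) < ε} = 1} := by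
  have hAeq : {x : Fin n → Vs f C x₀ | ∀ ε > 0,
      upperDensity {i | ∀ j k : Fin n, j < k →
        dist (f^[i] (x j : X)) (f^[i] (x k : X)) < ε} = 1} =
      ⋂ (m : ℕ), ⋂ (k : ℕ), ⋂ (N : ℕ),
        {x : Fin n → Vs f C x₀ | ∃ nn, N ≤ nn ∧
          (1 - 1/(k+1) : ℝ) < (({i | ∀ j k' : Fin n, j < k' →
            dist (f^[i] (x j : X)) (f^[i] (x k' : X)) < 1/(m+1)} ∩ Set.Iio nn).ncard : ℝ) / nn} := by
    ext x
    simp only [Set.mem_iInter, Set.mem_setOf_eq]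
    constructor
    · intro hx m k N
      have hpos : (0:ℝ) < 1/(m+1) := by positivity
      have h1 := (upperDensity_eq_one_iff _).1 (hx _ hpos)
      have hc : (1 - 1/(k+1) : ℝ) < 1 := by
        have : (0:ℝ) < 1/(k+1) := by positivity
        linarith
      obtain ⟨nn, hnn1, hnn2⟩ := h1 _ hc N
      exact ⟨nn, hnn1, hnn2⟩
    · intro hx ε hε
      obtain ⟨m, hm⟩ := exists_nat_gt (1/ε)
      have hmε : (1:ℝ)/(m+1) ≤ ε := by
        rw [div_le_iff₀ (by positivity)]
        have h1 : 1/ε < (m:ℝ) + 1 := by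
          have : (0:ℝ) ≤ m := by positivity
          linarith
        calc (1:ℝ) = ε * (1/ε) := by field_simp
          _ ≤ ε * ((m:ℝ)+1) := by
              exact mul_le_mul_of_nonneg_left h1.le hε.le
      have hmono : {i | ∀ j k' : Fin n, j < k' →
          dist (f^[i] (x j : X)) (f^[i] (x k' : X)) < 1/(m+1)} ⊆
          {i | ∀ j k' : Fin n, j < k' →
          dist (f^[i] (x j : X)) (f^[i] (x k' : X)) < ε} := by
        intro i hi j k' hjk
        exact lt_of_lt_of_le (hi j k' hjk) hmε
      refine le_antisymm (upperDensity_le_one _) ?_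
      have h2 : upperDensity {i | ∀ j k' : Fin n, j < k' →
          dist (f^[i] (x j : X)) (f^[i] (x k' : X)) < 1/(m+1)} = 1 := by
        rw [upperDensity_eq_one_iff]
        intro c hc N
        obtain ⟨k, hk⟩ := exists_nat_gt (1/(1-c))
        have hck : c ≤ 1 - 1/(k+1) := by
          have hc1 : (0:ℝ) < 1 - c := by linarith
          have h3 : 1/(1-c) < (k:ℝ)+1 := by
            have : (0:ℝ) ≤ k := by positivity
            linarith
          have h4 : (1:ℝ)/(k+1) ≤ 1 - c := by
            rw [div_le_iff₀ (by positivity)]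
            calc (1:ℝ) = (1-c) * (1/(1-c)) := by field_simp
              _ ≤ (1-c) * ((k:ℝ)+1) := mul_le_mul_of_nonneg_left h3.le hc1.le
          linarith
        obtain ⟨nn, hnn1, hnn2⟩ := hx m k N
        exact ⟨nn, hnn1, lt_of_le_of_lt hck hnn2⟩
      calc (1:ℝ) = upperDensity {i | ∀ j k' : Fin n, j < k' →
            dist (f^[i] (x j : X)) (f^[i] (x k' : X)) < 1/(m+1)} := h2.symm
        _ ≤ _ := upperDensity_mono hmono
  rw [hAeq]
  refine IsGδ.iInter fun m => IsGδ.iInter fun k => IsGδ.iInter fun N => IsOpen.isGδ ?_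
  have : {x : Fin n → Vs f C x₀ | ∃ nn, N ≤ nn ∧
      (1 - 1/(k+1) : ℝ) < (({i | ∀ j k' : Fin n, j < k' →
        dist (f^[i] (x j : X)) (f^[i] (x k' : X)) < 1/(m+1)} ∩ Set.Iio nn).ncard : ℝ) / nn} =
      ⋃ (nn : ℕ), ⋃ (_ : N ≤ nn),
        {x : Fin n → Vs f C x₀ |
          (1 - 1/(k+1) : ℝ) < (({i | ∀ j k' : Fin n, j < k' →
          dist (f^[i] (x j : X)) (f^[i] (x k' : X)) < 1/(m+1)} ∩ Set.Iio nn).ncard : ℝ) / nn} := by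
    ext x
    simp only [Set.mem_iUnion, Set.mem_setOf_eq]
    constructor
    · rintro ⟨nn, h1, h2⟩; exact ⟨nn, h1, h2⟩
    · rintro ⟨nn, h1, h2⟩; exact ⟨nn, h1, h2⟩
  rw [this]
  exact isOpen_iUnion fun nn => isOpen_iUnion fun _ => isOpen_card_gt hf nn _


include hf hs hC hx₀ hp in
theorem dense_asymp :
    Dense {x : Fin n → Vs f C x₀ | ∀ j : Fin n,
        Tendsto (fun i => dist (f^[i] p) (f^[i] (x j : X))) atTop (𝓝 0)} := by
  rw [Metric.dense_iff]
  intro x r hr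
  have hsel : ∀ j : Fin n, ∃ z ∈ Vs f C x₀, dist z (x j : X) ≤ r/2 ∧
      Tendsto (fun i => dist (f^[i] z) (f^[i] p)) atTop (𝓝 0) := by
    intro j
    obtain ⟨z, hz1, hz2, hz3⟩ := main_lemma hf hs hC hx₀ hp (x j).2 (by linarith : (0:ℝ) < r/2)
    exact ⟨z, hz1, hz2, hz3⟩
  choose z hzV hzd hzt using hsel
  refine ⟨fun j => ⟨z j, hzV j⟩, ?_, ?_⟩
  · rw [Metric.mem_ball]
    rw [dist_pi_lt_iff hr]
    intro j
    rw [Subtype.dist_eq]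
    calc dist (z j) (x j : X) ≤ r/2 := hzd j
      _ < r := by linarith
  · intro j
    have := hzt j
    refine this.congr ?_
    intro i
    simp [dist_comm]

include hp in
theorem asymp_subset :
    {x : Fin n → Vs f C x₀ | ∀ j : Fin n,
        Tendsto (fun i => dist (f^[i] p) (f^[i] (x j : X))) atTop (𝓝 0)} ⊆
      {x : Fin n → Vs f C x₀ | ∀ ε > 0,
        upperDensity {i | ∀ j k : Fin n, j < k →
          dist (f^[i] (x j : X)) (f^[i] (x k : X)) < ε} = 1} := by
  intro x hx ε hε
  have hev : ∀ᶠ i in atTop, ∀ j k : Fin n, j < k →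
      dist (f^[i] (x j : X)) (f^[i] (x k : X)) < ε := by
    rw [eventually_all]
    intro j
    rw [eventually_all]
    intro k
    by_cases hjk : j < k
    · have hj := (hx j).eventually_lt_const (show (0:ℝ) < ε/2 by linarith)
      have hk := (hx k).eventually_lt_const (show (0:ℝ) < ε/2 by linarith)
      filter_upwards [hj, hk] with i h1 h2 _
      calc dist (f^[i] (x j : X)) (f^[i] (x k : X))
          ≤ dist (f^[i] (x j : X)) (f^[i] p) + dist (f^[i] p) (f^[i] (x k : X)) :=
            dist_triangle _ _ _
        _ < ε/2 + ε/2 := by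
            rw [dist_comm]
            exact add_lt_add h1 h2
        _ = ε := by ring
    · exact Filter.Eventually.of_forall fun i h => absurd h hjk
  obtain ⟨N, hN⟩ := eventually_atTop.1 hev
  exact upperDensity_eq_one_of_cofinite hN

end Assembly

end Stmt18Aux

/-- Under s-limit shadowing, the set `Aₙ` of tuples in `[V^s(D)]ⁿ` whose
proximality times have upper density one is a dense Gδ set; indeed the tuples
asymptotic to a fixed `p ∈ V^s(D)` form a dense subset of it. -/
theorem stmt18 {X : Type*} [MetricSpace X] [CompactSpace X]
    (f : X → X) (hf : Continuous f) (hs : SLimitShadowing f)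
    (C : Set X) (hC : IsChainComponent f C) (x₀ : X) (hx₀ : x₀ ∈ C)
    (p : X) (hp : p ∈ Vs f C x₀) (n : ℕ) (hn : 2 ≤ n) :
    IsGδ {x : Fin n → Vs f C x₀ | ∀ ε > 0,
        upperDensity {i | ∀ j k : Fin n, j < k →
          dist (f^[i] (x j : X)) (f^[i] (x k : X)) < ε} = 1} ∧
    Dense {x : Fin n → Vs f C x₀ | ∀ ε > 0,
        upperDensity {i | ∀ j k : Fin n, j < k →
          dist (f^[i] (x j : X)) (f^[i] (x k : X)) < ε} = 1} ∧
    Dense {x : Fin n → Vs f C x₀ | ∀ j : Fin n,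
        Tendsto (fun i => dist (f^[i] p) (f^[i] (x j : X))) atTop (𝓝 0)} ∧
    {x : Fin n → Vs f C x₀ | ∀ j : Fin n,
        Tendsto (fun i => dist (f^[i] p) (f^[i] (x j : X))) atTop (𝓝 0)} ⊆
      {x : Fin n → Vs f C x₀ | ∀ ε > 0,
        upperDensity {i | ∀ j k : Fin n, j < k →
          dist (f^[i] (x j : X)) (f^[i] (x k : X)) < ε} = 1} :=
  ⟨isGδ_A hf, (dense_asymp hf hs hC hx₀ hp).mono (asymp_subset hp),
    dense_asymp hf hs hC hx₀ hp, asymp_subset hp⟩
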